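/- Let f : R^n → R^n and ψ : R^n → R be C¹ with ∇ψ(q)·f(q) < 0 at a point q (so f(q) ≠ 0 and ∇ψ(q) ≠ 0). Define Q = (∇ψ×f)/(∇ψ·∇ψ) and D = -[ (f·f)/(∇ψ·f) E + (∇ψ×f)²/((∇ψ·f)(∇ψ·∇ψ)) ]. Then D is symmetric, Q is antisymmetric, and -(D+Q) ∇ψ(q) = f(q). -/

import Mathlib

open Matrix Filter Topology

/-- Matrix-valued cross product: `(x×y)ᵢⱼ = xᵢyⱼ - xⱼyᵢ`. -/
def cross {ι : Type*} (x y : ι → ℝ) : Matrix ι ι ℝ :=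
  Matrix.of fun i j => x i * y j - x j * y i


/-- The gradient of `ψ`, viewed as a plain vector of partial derivatives. -/
noncomputable def grad {ι : Type*} [Fintype ι] (ψ : EuclideanSpace ℝ ι → ℝ)
    (q : EuclideanSpace ℝ ι) : ι → ℝ :=
  (gradient ψ q : EuclideanSpace ℝ ι)

lemma cross_transpose {n : ℕ} (x y : Fin n → ℝ) : (cross x y)ᵀ = -(cross x y) := by
  ext i j
  simp [cross, Matrix.transpose]

lemma cross_mulVec {n : ℕ} (x y z : Fin n → ℝ) :
    (cross x y).mulVec z = (y ⬝ᵥ z) • x - (x ⬝ᵥ z) • y := by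
  funext i
  simp only [cross, Matrix.mulVec, dotProduct, Matrix.of_apply, Pi.sub_apply,
    Pi.smul_apply, smul_eq_mul, sub_mul, Finset.sum_sub_distrib]
  congr 1 <;> (rw [Finset.sum_mul]; exact Finset.sum_congr rfl fun j _ => by ring)

theorem stmt6 {n : ℕ} (ψ : EuclideanSpace ℝ (Fin n) → ℝ)
    (f : EuclideanSpace ℝ (Fin n) → EuclideanSpace ℝ (Fin n))
    (hψ : ContDiff ℝ 1 ψ)
    (q : EuclideanSpace ℝ (Fin n)) (hq : grad ψ q ⬝ᵥ f q < 0) :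
    (-(((f q ⬝ᵥ f q) / (grad ψ q ⬝ᵥ f q)) • (1 : Matrix (Fin n) (Fin n) ℝ) +
        ((grad ψ q ⬝ᵥ f q) * (grad ψ q ⬝ᵥ grad ψ q))⁻¹ • (cross (grad ψ q) (f q)) ^ 2))ᵀ =
      -(((f q ⬝ᵥ f q) / (grad ψ q ⬝ᵥ f q)) • (1 : Matrix (Fin n) (Fin n) ℝ) +
        ((grad ψ q ⬝ᵥ f q) * (grad ψ q ⬝ᵥ grad ψ q))⁻¹ • (cross (grad ψ q) (f q)) ^ 2) ∧
    ((grad ψ q ⬝ᵥ grad ψ q)⁻¹ • cross (grad ψ q) (f q))ᵀ =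
      -((grad ψ q ⬝ᵥ grad ψ q)⁻¹ • cross (grad ψ q) (f q)) ∧
    -((-(((f q ⬝ᵥ f q) / (grad ψ q ⬝ᵥ f q)) • (1 : Matrix (Fin n) (Fin n) ℝ) +
          ((grad ψ q ⬝ᵥ f q) * (grad ψ q ⬝ᵥ grad ψ q))⁻¹ • (cross (grad ψ q) (f q)) ^ 2)) +
        (grad ψ q ⬝ᵥ grad ψ q)⁻¹ • cross (grad ψ q) (f q)).mulVec (grad ψ q) = f q := by
  set g := grad ψ q with hg
  set v : Fin n → ℝ := (f q : Fin n → ℝ) with hv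
  set a := g ⬝ᵥ v with haa
  set s := g ⬝ᵥ g with hss
  set t := v ⬝ᵥ v with htt
  have ha : a ≠ 0 := ne_of_lt hq
  have hgne : g ≠ 0 := by
    intro h
    apply ha
    simp [haa, h]
  have hs : s ≠ 0 := by
    rw [hss]
    intro h
    exact hgne (dotProduct_self_eq_zero.mp h)
  refine ⟨?_, ?_, ?_⟩
  · rw [Matrix.transpose_neg, Matrix.transpose_add, Matrix.transpose_smul,
      Matrix.transpose_one, Matrix.transpose_smul, pow_two, Matrix.transpose_mul,
      cross_transpose]
    rw [neg_mul_neg]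
  · rw [Matrix.transpose_smul, cross_transpose, smul_neg]
  · have h1 : (cross g v).mulVec g = a • g - s • v := by
      rw [cross_mulVec, ← hss]
      congr 2
      rw [dotProduct_comm]
    have h2 : (cross g v).mulVec v = t • g - a • v := by
      rw [cross_mulVec, ← haa, ← htt]
    have h3 : ((cross g v) ^ 2).mulVec g = (a ^ 2 - s * t) • g := by
      rw [pow_two, ← Matrix.mulVec_mulVec, h1, Matrix.mulVec_sub,
        Matrix.mulVec_smul, Matrix.mulVec_smul, h1, h2]
      funext i
      simp
      ring
    rw [Matrix.add_mulVec, Matrix.neg_mulVec, Matrix.add_mulVec,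
      Matrix.smul_mulVec, Matrix.smul_mulVec, Matrix.smul_mulVec,
      Matrix.one_mulVec, h1, h3]
    funext i
    simp
    field_simp
    ring
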